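/- In the reduced classification game, there cannot exist three distinct optimal 'Type II' extreme points of the defender's LP (with starting indices s, s+1, s+2): equality of their objective values would force μ_{s+1} = μ_{s+2}, contradicting strict monotonicity of μ. -/

import Mathlib

open Finset

/-- The defender's LP objective: min_i (Λβ)_i − μ'β. -/
noncomputable def lpObj (n : ℕ) (Λ : Fin (n+1) → Fin (n+2) → ℝ)
    (μ : Fin (n+2) → ℝ) (β : Fin (n+2) → ℝ) : ℝ :=
  (Finset.univ.inf' Finset.univ_nonempty fun i : Fin (n+1) => ∑ j, Λ i j * β j)
    - ∑ j, μ j * β j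

/-- Membership in the polyhedron P = {x : Λx ≥ 1, x ≥ 0}. -/
def InPoly (n : ℕ) (Λ : Fin (n+1) → Fin (n+2) → ℝ) (x : Fin (n+2) → ℝ) : Prop :=
  (∀ j, 0 ≤ x j) ∧ ∀ i, 1 ≤ ∑ j, Λ i j * x j

/-- `x` corresponds (via normalization β = x/‖x‖₁) to a defender Nash equilibrium
strategy, i.e. β maximizes min_i(Λβ)_i − μ'β over the simplex. -/
def CorrespondsToEq (n : ℕ) (Λ : Fin (n+1) → Fin (n+2) → ℝ)
    (μ : Fin (n+2) → ℝ) (x : Fin (n+2) → ℝ) : Prop :=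
  0 < ∑ j, x j ∧
  ∀ β : Fin (n+2) → ℝ, (∀ j, 0 ≤ β j) → (∑ j, β j = 1) →
    lpObj n Λ μ β ≤ lpObj n Λ μ (fun j => x j / ∑ j', x j')

/-- A 'Type II' point of the polyhedron with starting index s: zeros up to and
including index s, x_i = ((r_i − r_{i−1})/c_d)·‖x‖ > 0 for s+1 ≤ i ≤ m,
x_{m+1} ≥ 0, and all inequality constraints from row s through row m tight. -/
def TypeIIPt (n : ℕ) (Λ : Fin (n+1) → Fin (n+2) → ℝ) (r : Fin (n+1) → ℝ)
    (cd : ℝ) (x : Fin (n+2) → ℝ) (s : Fin (n+1)) : Prop :=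
  (∀ j : Fin (n+2), (j : ℕ) ≤ (s : ℕ) → x j = 0) ∧
  (∀ i : ℕ, ∀ h1 : (s : ℕ) < i, ∀ h2 : i ≤ n,
    x ⟨i, by omega⟩ = (r ⟨i, by omega⟩ - r ⟨i - 1, by omega⟩) / cd * ∑ j, x j ∧
    0 < x ⟨i, by omega⟩) ∧
  0 ≤ x (Fin.last (n+1)) ∧
  (∀ i : Fin (n+1), (s : ℕ) ≤ (i : ℕ) → ∑ j, Λ i j * x j = 1)

lemma row_formula (n : ℕ) (r : Fin (n+1) → ℝ) (cd ε : ℝ)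
    (Λ : Fin (n+1) → Fin (n+2) → ℝ)
    (hΛ : ∀ i j, Λ i j =
      cd * (if (j : ℕ) ≤ (i : ℕ) then 1 else 0) - r i + (r (Fin.last n) + ε))
    (β : Fin (n+2) → ℝ) (i : Fin (n+1)) :
    ∑ j, Λ i j * β j
      = cd * (∑ j : Fin (n+2), if (j : ℕ) ≤ (i : ℕ) then β j else 0)
        + (r (Fin.last n) - r i + ε) * ∑ j, β j := by
  have h : ∀ j : Fin (n+2), Λ i j * β j
      = cd * (if (j : ℕ) ≤ (i : ℕ) then β j else 0)
        + (r (Fin.last n) - r i + ε) * β j := by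
    intro j
    rw [hΛ]
    split_ifs <;> ring
  simp only [h, Finset.sum_add_distrib, ← Finset.mul_sum]


lemma lp_formula (n : ℕ) (r : Fin (n+1) → ℝ) (cd ε : ℝ)
    (hr : ∀ i j : Fin (n+1), i < j → r i < r j) (hε : 0 < ε)
    (μ : Fin (n+2) → ℝ) (Λ : Fin (n+1) → Fin (n+2) → ℝ)
    (hΛ : ∀ i j, Λ i j =
      cd * (if (j : ℕ) ≤ (i : ℕ) then 1 else 0) - r i + (r (Fin.last n) + ε))
    (x : Fin (n+2) → ℝ) (s : ℕ) (hsn : s ≤ n)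
    (hxII : TypeIIPt n Λ r cd x ⟨s, by omega⟩)
    (hS : 0 < ∑ j, x j) :
    lpObj n Λ μ (fun j => x j / ∑ j', x j')
      = (r (Fin.last n) - r ⟨s, by omega⟩ + ε)
        - ∑ j, μ j * (x j / ∑ j', x j') := by
  have hSne : (∑ j, x j) ≠ 0 := ne_of_gt hS
  -- value of rows on x
  have hrowx : ∀ i : Fin (n+1), (i : ℕ) ≤ s →
      ∑ j, Λ i j * x j = (r (Fin.last n) - r i + ε) * ∑ j, x j := by
    intro i hi
    rw [row_formula n r cd ε Λ hΛ x i]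
    have : (∑ j : Fin (n+2), if (j : ℕ) ≤ (i : ℕ) then x j else 0) = 0 := by
      apply Finset.sum_eq_zero
      intro j _
      split_ifs with h
      · exact hxII.1 j (show (j:ℕ) ≤ s by omega)
      · rfl
    rw [this]; ring
  -- 1/S = r_L - r_s + ε
  have hSval : (r (Fin.last n) - r ⟨s, by omega⟩ + ε) * ∑ j, x j = 1 := by
    rw [← hrowx ⟨s, by omega⟩ (le_refl s)]
    exact hxII.2.2.2 ⟨s, by omega⟩ (le_refl s)
  -- rows of normalized vector
  have hrown : ∀ i : Fin (n+1),
      ∑ j, Λ i j * (x j / ∑ j', x j') = (∑ j, Λ i j * x j) / ∑ j', x j' := by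
    intro i
    rw [Finset.sum_div]
    exact Finset.sum_congr rfl fun j _ => (mul_div_assoc _ _ _).symm
  have hval : ∀ i : Fin (n+1), (s : ℕ) ≤ (i : ℕ) →
      ∑ j, Λ i j * (x j / ∑ j', x j') = r (Fin.last n) - r ⟨s, by omega⟩ + ε := by
    intro i hi
    rw [hrown i, hxII.2.2.2 i hi]
    field_simp
    linarith [hSval]
  have hlb : ∀ i : Fin (n+1),
      r (Fin.last n) - r ⟨s, by omega⟩ + ε ≤ ∑ j, Λ i j * (x j / ∑ j', x j') := by
    intro i
    rcases le_or_gt (s : ℕ) (i : ℕ) with h | h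
    · rw [hval i h]
    · rw [hrown i, hrowx i (by omega)]
      rw [mul_div_assoc, div_self hSne, mul_one]
      have : r i < r ⟨s, by omega⟩ := hr i ⟨s, by omega⟩ (by simpa [Fin.lt_def] using h)
      linarith
  have hinf : (Finset.univ.inf' Finset.univ_nonempty
      fun i : Fin (n+1) => ∑ j, Λ i j * (x j / ∑ j', x j'))
      = r (Fin.last n) - r ⟨s, by omega⟩ + ε := by
    apply le_antisymm
    · have h := Finset.inf'_le (fun i : Fin (n+1) => ∑ j, Λ i j * (x j / ∑ j', x j'))
          (Finset.mem_univ (⟨s, by omega⟩ : Fin (n+1)))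
      rw [hval ⟨s, by omega⟩ (le_refl s)] at h
      exact h
    · exact Finset.le_inf' _ _ fun i _ => hlb i
  unfold lpObj
  rw [hinf]

lemma pair_eq (n : ℕ) (r : Fin (n+1) → ℝ) (cd ε : ℝ)
    (hr : ∀ i j : Fin (n+1), i < j → r i < r j) (hcd : 0 < cd) (hε : 0 < ε)
    (μ : Fin (n+2) → ℝ) (Λ : Fin (n+1) → Fin (n+2) → ℝ)
    (hΛ : ∀ i j, Λ i j =
      cd * (if (j : ℕ) ≤ (i : ℕ) then 1 else 0) - r i + (r (Fin.last n) + ε))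
    (x y : Fin (n+2) → ℝ) (hx : InPoly n Λ x) (hy : InPoly n Λ y)
    (s : ℕ) (hs : s + 1 ≤ n)
    (hxII : TypeIIPt n Λ r cd x ⟨s, by omega⟩)
    (hyII : TypeIIPt n Λ r cd y ⟨s + 1, by omega⟩)
    (hxeq : CorrespondsToEq n Λ μ x) (hyeq : CorrespondsToEq n Λ μ y) :
    μ ⟨s + 1, by omega⟩ = cd + μ (Fin.last (n+1)) := by
  obtain ⟨hSx, hxopt⟩ := hxeq
  obtain ⟨hSy, hyopt⟩ := hyeq
  have hSxne : (∑ j, x j) ≠ 0 := ne_of_gt hSx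
  have hSyne : (∑ j, y j) ≠ 0 := ne_of_gt hSy
  have hun : ∀ j, 0 ≤ x j / ∑ j', x j' := fun j => div_nonneg (hx.1 j) hSx.le
  have hvn : ∀ j, 0 ≤ y j / ∑ j', y j' := fun j => div_nonneg (hy.1 j) hSy.le
  have husum : ∑ j, x j / ∑ j', x j' = 1 := by
    rw [← Finset.sum_div]; exact div_self hSxne
  have hvsum : ∑ j, y j / ∑ j', y j' = 1 := by
    rw [← Finset.sum_div]; exact div_self hSyne
  have hEq : lpObj n Λ μ (fun j => x j / ∑ j', x j')
      = lpObj n Λ μ (fun j => y j / ∑ j', y j') :=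
    le_antisymm (hyopt _ hun husum) (hxopt _ hvn hvsum)
  rw [lp_formula n r cd ε hr hε μ Λ hΛ x s (by omega) hxII hSx,
      lp_formula n r cd ε hr hε μ Λ hΛ y (s+1) hs hyII hSy] at hEq
  -- pointwise values of normalized vectors
  have hu0 : ∀ j : Fin (n+2), (j : ℕ) ≤ s → x j / ∑ j', x j' = 0 := by
    intro j hj; rw [hxII.1 j hj, zero_div]
  have hv0 : ∀ j : Fin (n+2), (j : ℕ) ≤ s + 1 → y j / ∑ j', y j' = 0 := by
    intro j hj; rw [hyII.1 j hj, zero_div]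
  have huval : ∀ i : ℕ, ∀ h1 : s < i, ∀ h2 : i ≤ n,
      x ⟨i, by omega⟩ / ∑ j', x j' = (r ⟨i, by omega⟩ - r ⟨i - 1, by omega⟩) / cd := by
    intro i h1 h2
    rw [(hxII.2.1 i h1 h2).1, mul_div_assoc, div_self hSxne, mul_one]
  have hvval : ∀ i : ℕ, ∀ h1 : s + 1 < i, ∀ h2 : i ≤ n,
      y ⟨i, by omega⟩ / ∑ j', y j' = (r ⟨i, by omega⟩ - r ⟨i - 1, by omega⟩) / cd := by
    intro i h1 h2
    rw [(hyII.2.1 i h1 h2).1, mul_div_assoc, div_self hSyne, mul_one]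
  have hsum0 : ∑ j : Fin (n+2), (x j / ∑ j', x j' - y j / ∑ j', y j') = 0 := by
    rw [Finset.sum_sub_distrib, husum, hvsum, sub_self]
  -- the difference of μ-weighted sums
  have hM : ∑ j, μ j * (x j / ∑ j', x j') - ∑ j, μ j * (y j / ∑ j', y j')
      = (μ ⟨s + 1, by omega⟩ - μ (Fin.last (n+1)))
          * ((r ⟨s + 1, by omega⟩ - r ⟨s, by omega⟩) / cd) := by
    have step1 : ∑ j, μ j * (x j / ∑ j', x j') - ∑ j, μ j * (y j / ∑ j', y j')
        = ∑ j : Fin (n+2), (μ j - μ (Fin.last (n+1)))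
            * (x j / ∑ j', x j' - y j / ∑ j', y j') := by
      calc ∑ j, μ j * (x j / ∑ j', x j') - ∑ j, μ j * (y j / ∑ j', y j')
          = ∑ j : Fin (n+2), (μ j * (x j / ∑ j', x j') - μ j * (y j / ∑ j', y j')) :=
            (Finset.sum_sub_distrib _ _).symm
        _ = ∑ j : Fin (n+2), ((μ j - μ (Fin.last (n+1)))
              * (x j / ∑ j', x j' - y j / ∑ j', y j')
              + μ (Fin.last (n+1)) * (x j / ∑ j', x j' - y j / ∑ j', y j')) := by
            apply Finset.sum_congr rfl; intros; ring
        _ = (∑ j : Fin (n+2), (μ j - μ (Fin.last (n+1)))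
              * (x j / ∑ j', x j' - y j / ∑ j', y j'))
              + μ (Fin.last (n+1))
                * ∑ j : Fin (n+2), (x j / ∑ j', x j' - y j / ∑ j', y j') := by
            rw [Finset.sum_add_distrib, Finset.mul_sum]
        _ = _ := by rw [hsum0, mul_zero, add_zero]
    rw [step1]
    rw [Finset.sum_eq_single (⟨s + 1, by omega⟩ : Fin (n+2))]
    · rw [huval (s+1) (by omega) hs, hv0 ⟨s + 1, by omega⟩ (le_refl _), sub_zero]
      norm_num
    · intro b _ hb
      rcases b with ⟨b, hb2⟩
      by_cases hbl : b = n + 1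
      · subst hbl
        have : (⟨n + 1, hb2⟩ : Fin (n+2)) = Fin.last (n+1) := rfl
        rw [this, sub_self, zero_mul]
      · have hbn : b ≤ n := by omega
        rcases le_or_gt b s with hbs | hbs
        · rw [hu0 ⟨b, hb2⟩ hbs, hv0 ⟨b, hb2⟩ (show b ≤ s + 1 by omega), sub_self, mul_zero]
        · have hbs1 : s + 1 < b := by
            rcases Nat.lt_or_ge (s+1) b with h | h
            · exact h
            · exfalso; exact hb (by ext; simp; omega)
          rw [huval b hbs hbn, hvval b hbs1 hbn, sub_self, mul_zero]
    · intro h; exact absurd (Finset.mem_univ _) h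
  -- conclude
  have hd : 0 < r ⟨s + 1, by omega⟩ - r ⟨s, by omega⟩ := by
    have := hr ⟨s, by omega⟩ ⟨s + 1, by omega⟩ (by simp [Fin.lt_def])
    linarith
  have key : r ⟨s + 1, by omega⟩ - r ⟨s, by omega⟩
      = (μ ⟨s + 1, by omega⟩ - μ (Fin.last (n+1)))
          * ((r ⟨s + 1, by omega⟩ - r ⟨s, by omega⟩) / cd) := by
    linarith [hM, hEq]
  have h1 : cd * (r ⟨s + 1, by omega⟩ - r ⟨s, by omega⟩)
      = (μ ⟨s + 1, by omega⟩ - μ (Fin.last (n+1)))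
          * (r ⟨s + 1, by omega⟩ - r ⟨s, by omega⟩) := by
    field_simp at key
    rw [key]
  have := mul_right_cancel₀ (ne_of_gt hd) h1
  linarith

/-- there cannot exist three distinct optimal Type II extreme points
with consecutive starting indices s, s+1, s+2. -/
theorem no_three_consecutive_typeII_optimal
    (n : ℕ) (r : Fin (n+1) → ℝ) (cd ε : ℝ)
    (hr : ∀ i j : Fin (n+1), i < j → r i < r j) (hcd : 0 < cd) (hε : 0 < ε)
    (μ : Fin (n+2) → ℝ) (hμ : ∀ j : Fin (n+1), μ j.succ < μ j.castSucc)
    (Λ : Fin (n+1) → Fin (n+2) → ℝ)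
    (hΛ : ∀ i j, Λ i j =
      cd * (if (j : ℕ) ≤ (i : ℕ) then 1 else 0) - r i + (r (Fin.last n) + ε))
    (x y z : Fin (n+2) → ℝ)
    (hx : InPoly n Λ x) (hy : InPoly n Λ y) (hz : InPoly n Λ z)
    (s : ℕ) (hs : s + 2 ≤ n)
    (hxII : TypeIIPt n Λ r cd x ⟨s, by omega⟩)
    (hyII : TypeIIPt n Λ r cd y ⟨s + 1, by omega⟩)
    (hzII : TypeIIPt n Λ r cd z ⟨s + 2, by omega⟩)
    (hxeq : CorrespondsToEq n Λ μ x) (hyeq : CorrespondsToEq n Λ μ y)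
    (hzeq : CorrespondsToEq n Λ μ z) :
    False := by
  have h1 : μ ⟨s + 1, by omega⟩ = cd + μ (Fin.last (n+1)) :=
    pair_eq n r cd ε hr hcd hε μ Λ hΛ x y hx hy s (by omega) hxII hyII hxeq hyeq
  have h2 : μ ⟨s + 2, by omega⟩ = cd + μ (Fin.last (n+1)) :=
    pair_eq n r cd ε hr hcd hε μ Λ hΛ y z hy hz (s + 1) (by omega) hyII hzII hyeq hzeq
  have h3 : μ ⟨s + 2, by omega⟩ < μ ⟨s + 1, by omega⟩ := hμ ⟨s + 1, by omega⟩
  linarith
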